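/- Let G be a finite subgroup of the unitary group U(n) generated by unitary reflections, and let f₁, …, f_n be homogeneous, algebraically independent polynomials generating the algebra ℂ[z₁, …, z_n]^G of G-invariant polynomials. Then the map ℂⁿ → ℂⁿ, v ↦ (f₁(v), …, f_n(v)), descends to the orbit space and the induced map ℂⁿ/G → ℂⁿ, [v] ↦ (f₁(v), …, f_n(v)), is a homeomorphism, where ℂⁿ/G carries the quotient topology. -/

import Mathlib

noncomputable section

/-- The unitary group `U(n)` of `ℂⁿ`, realized as the unitary group of `n × n`
complex matrices. -/
abbrev UGrp (n : ℕ) := Matrix.unitaryGroup (Fin n) ℂ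

/-- The natural action of `U(n)` on `ℂⁿ` by matrix-vector multiplication. -/
instance {n : ℕ} : MulAction (UGrp n) (Fin n → ℂ) where
  smul g v := Matrix.mulVec g.1 v
  one_smul v := Matrix.one_mulVec v
  mul_smul g h v := (Matrix.mulVec_mulVec v g.1 h.1).symm

/-- A unitary reflection: an element of `U(n)` of finite order whose fixed-point
subspace `{v : gv = v}` is a complex hyperplane (complex dimension `n - 1`). -/
def IsUnitaryReflection {n : ℕ} (g : UGrp n) : Prop :=
  IsOfFinOrder g ∧
  Module.finrank ℂ ↥(LinearMap.ker ((g.1 - 1).mulVecLin)) + 1 = n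

open MvPolynomial

namespace ChevAux
variable {n : ℕ}

lemma sep_point (b t : Fin n → ℂ) (h : b ≠ t) :
    ∃ q : MvPolynomial (Fin n) ℂ, eval b q = 1 ∧ eval t q = 0 := by
  obtain ⟨i, hi⟩ := Function.ne_iff.mp h
  refine ⟨C (b i - t i)⁻¹ * (X i - C (t i)), ?_, ?_⟩
  · simp [inv_mul_cancel₀ (sub_ne_zero.mpr hi)]
  · simp

lemma indicator_poly (S : Finset (Fin n → ℂ)) (b : Fin n → ℂ) :
    ∃ q : MvPolynomial (Fin n) ℂ, eval b q = 1 ∧ ∀ t ∈ S, t ≠ b → eval t q = 0 := by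
  have H : ∀ t : Fin n → ℂ, ∃ q : MvPolynomial (Fin n) ℂ,
      t ≠ b → (eval b q = 1 ∧ eval t q = 0) := by
    intro t
    rcases eq_or_ne t b with rfl | ht
    · exact ⟨1, fun h => absurd rfl h⟩
    · obtain ⟨q, h1, h0⟩ := sep_point b t (Ne.symm ht)
      exact ⟨q, fun _ => ⟨h1, h0⟩⟩
  choose q hq using H
  refine ⟨∏ t ∈ S.erase b, q t, ?_, ?_⟩
  · rw [map_prod]
    refine Finset.prod_eq_one fun t ht => ?_
    exact (hq t (Finset.ne_of_mem_erase ht)).1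
  · intro t htS htb
    rw [map_prod]
    exact Finset.prod_eq_zero (Finset.mem_erase.mpr ⟨htb, htS⟩)
      (hq t htb).2

lemma interp_poly (A B : Finset (Fin n → ℂ)) (hAB : ∀ a ∈ A, ∀ b ∈ B, a ≠ b) :
    ∃ p : MvPolynomial (Fin n) ℂ, (∀ a ∈ A, eval a p = 0) ∧ (∀ b ∈ B, eval b p = 1) := by
  have H := fun b : Fin n → ℂ => indicator_poly (A ∪ B) b
  choose δ h1 h0 using H
  refine ⟨∑ b ∈ B, δ b, ?_, ?_⟩
  · intro a ha
    rw [map_sum]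
    refine Finset.sum_eq_zero fun b hb => ?_
    exact h0 b a (Finset.mem_union_left _ ha) (hAB a ha b hb)
  · intro b hb
    rw [map_sum]
    rw [Finset.sum_eq_single b (fun t htB htb => h0 t b (Finset.mem_union_right _ hb) (Ne.symm htb))
      (fun h => absurd hb h)]
    exact h1 b

/-- The linear polynomial `x ↦ (g x) k`. -/
def lin (g : UGrp n) (k : Fin n) : MvPolynomial (Fin n) ℂ := ∑ m, C (g.1 k m) * X m

lemma eval_lin (g : UGrp n) (x : Fin n → ℂ) (k : Fin n) :
    eval x (lin g k) = Matrix.mulVec g.1 x k := by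
  simp [lin, Matrix.mulVec, dotProduct]

lemma eval_aeval (x : Fin n → ℂ) (L : Fin n → MvPolynomial (Fin n) ℂ)
    (p : MvPolynomial (Fin n) ℂ) :
    eval x (aeval L p) = eval (fun k => eval x (L k)) p := by
  rw [aeval_def, algebraMap_eq, eval_eval₂]
  have h : (eval x).comp (C : ℂ →+* MvPolynomial (Fin n) ℂ) = RingHom.id ℂ := by
    ext c; simp
  rw [h]
  rfl

lemma eval_aeval_lin (g : UGrp n) (x : Fin n → ℂ) (p : MvPolynomial (Fin n) ℂ) :
    eval x (aeval (lin g) p) = eval (Matrix.mulVec g.1 x) p := by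
  rw [eval_aeval]
  have hfe : (fun k => eval x (lin g k)) = Matrix.mulVec g.1 x := funext (eval_lin g x)
  rw [hfe]

lemma lin_one (j : Fin n) : lin (1 : UGrp n) j = X j := by
  rw [lin, Finset.sum_eq_single j]
  · simp
  · intro m _ hm
    have : (1 : UGrp n).1 j m = 0 := Matrix.one_apply_ne (Ne.symm hm)
    simp [this]
  · simp

lemma aeval_lin_lin (g h : UGrp n) (j : Fin n) :
    aeval (lin h) (lin g j) = lin (g * h) j := by
  simp only [lin, map_sum, map_mul, aeval_C, aeval_X, algebraMap_eq, Finset.mul_sum]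
  rw [Finset.sum_comm]
  refine Finset.sum_congr rfl fun k _ => ?_
  have : (g * h).1 j k = ∑ m, g.1 j m * h.1 m k := by
    show (g.1 * h.1) j k = _
    rw [Matrix.mul_apply]
  rw [this, map_sum, Finset.sum_mul]
  refine Finset.sum_congr rfl fun m _ => ?_
  rw [C_mul, mul_assoc]


section Group
variable (G : Subgroup (UGrp n)) [Finite G]

/-- `G` as a finset. -/
def gfin : Finset (UGrp n) := Set.Finite.toFinset (Set.toFinite (G : Set (UGrp n)))

lemma mem_gfin {g : UGrp n} : g ∈ gfin G ↔ g ∈ G := Set.Finite.mem_toFinset _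

lemma sum_reindex {M : Type*} [AddCommMonoid M] {h : UGrp n} (hh : h ∈ G)
    (F : UGrp n → M) : ∑ g ∈ gfin G, F (g * h) = ∑ g ∈ gfin G, F g := by
  refine Finset.sum_equiv (Equiv.mulRight h) (fun i => ?_) (fun i _ => rfl)
  simp only [mem_gfin, Equiv.coe_mulRight]
  constructor
  · intro hi; exact mul_mem hi hh
  · intro hi
    have := mul_mem hi (inv_mem hh)
    simpa using this

lemma separate {v w : Fin n → ℂ}
    (hvw : ∀ g ∈ G, Matrix.mulVec (g : UGrp n).1 v ≠ w) :
    ∃ q : MvPolynomial (Fin n) ℂ,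
      (∀ g ∈ G, ∀ x : Fin n → ℂ, eval (Matrix.mulVec (g : UGrp n).1 x) q = eval x q) ∧
      eval v q ≠ eval w q := by
  classical
  set s := gfin G with hs
  set A : Finset (Fin n → ℂ) := s.image (fun g => Matrix.mulVec g.1 v) with hA
  set B : Finset (Fin n → ℂ) := s.image (fun g => Matrix.mulVec g.1 w) with hB
  have hAB : ∀ a ∈ A, ∀ b ∈ B, a ≠ b := by
    intro a ha b hb hab
    obtain ⟨g, hg, rfl⟩ := Finset.mem_image.mp ha
    obtain ⟨h, hh, rfl⟩ := Finset.mem_image.mp hb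
    rw [mem_gfin] at hg hh
    apply hvw (h⁻¹ * g) (mul_mem (inv_mem hh) hg)
    have : (h⁻¹ * g).1.mulVec v = (h⁻¹).1.mulVec (g.1.mulVec v) := by
      rw [Matrix.mulVec_mulVec]
      rfl
    rw [this, hab, Matrix.mulVec_mulVec]
    have : (h⁻¹).1 * h.1 = 1 := by
      have : (h⁻¹ * h : UGrp n) = 1 := inv_mul_cancel h
      calc (h⁻¹).1 * h.1 = ((h⁻¹ * h : UGrp n) : Matrix (Fin n) (Fin n) ℂ) := rfl
        _ = 1 := by rw [this]; rfl
    rw [this, Matrix.one_mulVec]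
  obtain ⟨p, hp0, hp1⟩ := interp_poly A B hAB
  refine ⟨∑ g ∈ s, aeval (lin g) p, ?_, ?_⟩
  · intro h hh x
    rw [map_sum, map_sum]
    have h1 : ∀ g : UGrp n, eval (Matrix.mulVec (h : UGrp n).1 x) (aeval (lin g) p)
        = eval x (aeval (lin (g * h)) p) := by
      intro g
      rw [eval_aeval_lin, eval_aeval_lin, Matrix.mulVec_mulVec]
      rfl
    calc ∑ g ∈ s, eval (Matrix.mulVec (h : UGrp n).1 x) (aeval (lin g) p)
        = ∑ g ∈ s, eval x (aeval (lin (g * h)) p) := Finset.sum_congr rfl (fun g _ => h1 g)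
      _ = ∑ g ∈ s, eval x (aeval (lin g) p) :=
          sum_reindex G hh (fun g => eval x (aeval (lin g) p))
  · have hv : eval v (∑ g ∈ s, aeval (lin g) p) = 0 := by
      rw [map_sum]
      refine Finset.sum_eq_zero fun g hg => ?_
      rw [eval_aeval_lin]
      exact hp0 _ (Finset.mem_image_of_mem _ hg)
    have hw : eval w (∑ g ∈ s, aeval (lin g) p) = (s.card : ℂ) := by
      rw [map_sum]
      rw [Finset.sum_congr rfl (fun g hg => ?_)]
      · rw [Finset.sum_const, nsmul_eq_mul, mul_one]
      · rw [eval_aeval_lin]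
        exact hp1 _ (Finset.mem_image_of_mem _ hg)
    rw [hv, hw]
    have hcard : s.card ≠ 0 := by
      refine Finset.card_ne_zero_of_mem (a := 1) ?_
      rw [hs, mem_gfin]
      exact one_mem G
    intro h
    exact hcard (by exact_mod_cast h.symm)

lemma inj_orbit (f : Fin n → MvPolynomial (Fin n) ℂ)
    (hgenalg : ∀ p : MvPolynomial (Fin n) ℂ,
      (∀ g ∈ G, ∀ v : Fin n → ℂ,
        MvPolynomial.eval (Matrix.mulVec (g : UGrp n).1 v) p = MvPolynomial.eval v p) →
      p ∈ Algebra.adjoin ℂ (Set.range f))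
    {v w : Fin n → ℂ} (hvw : ∀ i, eval v (f i) = eval w (f i)) :
    ∃ g ∈ G, Matrix.mulVec (g : UGrp n).1 v = w := by
  by_contra hc
  push_neg at hc
  obtain ⟨q, hqinv, hqne⟩ := separate G hc
  have hq := hgenalg q hqinv
  rw [Algebra.adjoin_range_eq_range_aeval] at hq
  obtain ⟨r, hr⟩ := hq
  have hr' : aeval f r = q := hr
  apply hqne
  rw [← hr', eval_aeval, eval_aeval]
  have : (fun k => eval v (f k)) = fun k => eval w (f k) := funext hvw
  rw [this]

end Group

section Integral
variable (G : Subgroup (UGrp n)) [Finite G]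

lemma prod_reindex {M : Type*} [CommMonoid M] {h : UGrp n} (hh : h ∈ G)
    (F : UGrp n → M) : ∏ g ∈ gfin G, F (g * h) = ∏ g ∈ gfin G, F g := by
  refine Finset.prod_equiv (Equiv.mulRight h) (fun i => ?_) (fun i _ => rfl)
  simp only [mem_gfin, Equiv.coe_mulRight]
  constructor
  · intro hi; exact mul_mem hi hh
  · intro hi
    have := mul_mem hi (inv_mem hh)
    simpa using this

/-- The monic polynomial `∏_{g ∈ G} (T - (g⁻¹? g)·x_j)` having `X j` as a root. -/
def Pj (j : Fin n) : Polynomial (MvPolynomial (Fin n) ℂ) :=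
  ∏ g ∈ gfin G, (Polynomial.X - Polynomial.C (lin g j))

lemma Pj_monic (j : Fin n) : (Pj G j).Monic :=
  Polynomial.monic_prod_of_monic _ _ (fun g _ => Polynomial.monic_X_sub_C _)

lemma Pj_root (j : Fin n) :
    Polynomial.eval (X j : MvPolynomial (Fin n) ℂ) (Pj G j) = 0 := by
  rw [Pj, Polynomial.eval_prod]
  refine Finset.prod_eq_zero (i := (1 : UGrp n)) ((mem_gfin G).mpr (one_mem G)) ?_
  rw [Polynomial.eval_sub, Polynomial.eval_X, Polynomial.eval_C, lin_one, sub_self]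

lemma Pj_coeff_invariant (j : Fin n) (m : ℕ) {h : UGrp n} (hh : h ∈ G) :
    aeval (lin h) ((Pj G j).coeff m) = (Pj G j).coeff m := by
  have hmap : (Pj G j).map ((aeval (lin h) : MvPolynomial (Fin n) ℂ →ₐ[ℂ]
      MvPolynomial (Fin n) ℂ) : MvPolynomial (Fin n) ℂ →+* MvPolynomial (Fin n) ℂ)
      = Pj G j := by
    rw [Pj, Polynomial.map_prod]
    have : ∀ g : UGrp n, (Polynomial.X - Polynomial.C (lin g j)).map
        ((aeval (lin h) : MvPolynomial (Fin n) ℂ →ₐ[ℂ] MvPolynomial (Fin n) ℂ) :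
          MvPolynomial (Fin n) ℂ →+* MvPolynomial (Fin n) ℂ)
        = Polynomial.X - Polynomial.C (lin (g * h) j) := by
      intro g
      rw [Polynomial.map_sub, Polynomial.map_X, Polynomial.map_C]
      simp only [RingHom.coe_coe]
      rw [aeval_lin_lin]
    rw [Finset.prod_congr rfl (fun g _ => this g)]
    exact prod_reindex G hh (fun g => Polynomial.X - Polynomial.C (lin g j))
  conv_rhs => rw [← hmap]
  rw [Polynomial.coeff_map]
  rfl

lemma Pj_coeff_eval_invariant (j : Fin n) (m : ℕ) {h : UGrp n} (hh : h ∈ G)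
    (v : Fin n → ℂ) :
    eval (Matrix.mulVec (h : UGrp n).1 v) ((Pj G j).coeff m) = eval v ((Pj G j).coeff m) := by
  rw [← eval_aeval_lin, Pj_coeff_invariant G j m hh]

variable (f : Fin n → MvPolynomial (Fin n) ℂ)

lemma X_isIntegral
    (hgenalg : ∀ p : MvPolynomial (Fin n) ℂ,
      (∀ g ∈ G, ∀ v : Fin n → ℂ,
        MvPolynomial.eval (Matrix.mulVec (g : UGrp n).1 v) p = MvPolynomial.eval v p) →
      p ∈ Algebra.adjoin ℂ (Set.range f)) (j : Fin n) :
    IsIntegral (Algebra.adjoin ℂ (Set.range f)) (X j : MvPolynomial (Fin n) ℂ) := by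
  set A := Algebra.adjoin ℂ (Set.range f)
  have hcoeff : ∀ m, (Pj G j).coeff m ∈ A := fun m =>
    hgenalg _ (fun g hg v => Pj_coeff_eval_invariant G j m hg v)
  have hlift : Pj G j ∈ Polynomial.lifts (algebraMap A (MvPolynomial (Fin n) ℂ)) := by
    rw [Polynomial.lifts_iff_coeff_lifts]
    intro m
    exact ⟨⟨(Pj G j).coeff m, hcoeff m⟩, rfl⟩
  obtain ⟨q, hq, _, hqm⟩ := Polynomial.lifts_and_degree_eq_and_monic hlift (Pj_monic G j)
  refine ⟨q, hqm, ?_⟩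
  show Polynomial.eval₂ _ _ q = 0
  rw [← Polynomial.eval_map, hq]
  exact Pj_root G j

lemma all_isIntegral
    (hgenalg : ∀ p : MvPolynomial (Fin n) ℂ,
      (∀ g ∈ G, ∀ v : Fin n → ℂ,
        MvPolynomial.eval (Matrix.mulVec (g : UGrp n).1 v) p = MvPolynomial.eval v p) →
      p ∈ Algebra.adjoin ℂ (Set.range f)) :
    Algebra.IsIntegral (Algebra.adjoin ℂ (Set.range f)) (MvPolynomial (Fin n) ℂ) := by
  set A := Algebra.adjoin ℂ (Set.range f)
  rw [← integralClosure_eq_top_iff]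
  rw [eq_top_iff]
  intro x _
  have hx : x ∈ Algebra.adjoin ℂ (Set.range (X : Fin n → MvPolynomial (Fin n) ℂ)) := by
    rw [MvPolynomial.adjoin_range_X]; trivial
  induction hx using Algebra.adjoin_induction with
  | mem y hy =>
      obtain ⟨j, rfl⟩ := hy
      exact X_isIntegral G f hgenalg j
  | algebraMap c =>
      have : (algebraMap ℂ (MvPolynomial (Fin n) ℂ)) c
          = algebraMap A (MvPolynomial (Fin n) ℂ) ⟨algebraMap ℂ (MvPolynomial (Fin n) ℂ) c,
            Subalgebra.algebraMap_mem A c⟩ := rfl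
      rw [this]
      exact isIntegral_algebraMap
  | add y z _ _ hy hz => exact add_mem (hy trivial) (hz trivial)
  | mul y z _ _ hy hz => exact mul_mem (hy trivial) (hz trivial)

lemma surj_aux (hindep : AlgebraicIndependent ℂ f)
    (hgenalg : ∀ p : MvPolynomial (Fin n) ℂ,
      (∀ g ∈ G, ∀ v : Fin n → ℂ,
        MvPolynomial.eval (Matrix.mulVec (g : UGrp n).1 v) p = MvPolynomial.eval v p) →
      p ∈ Algebra.adjoin ℂ (Set.range f)) (y : Fin n → ℂ) :
    ∃ v : Fin n → ℂ, ∀ i, eval v (f i) = y i := by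
  set A := Algebra.adjoin ℂ (Set.range f) with hA
  haveI : Algebra.IsIntegral A (MvPolynomial (Fin n) ℂ) := all_isIntegral G f hgenalg
  set χ : A →ₐ[ℂ] ℂ := (aeval y).comp (hindep.aevalEquiv.symm : A →ₐ[ℂ] MvPolynomial (Fin n) ℂ)
    with hχ
  have hχsurj : Function.Surjective (χ : A →+* ℂ) := fun c =>
    ⟨algebraMap ℂ A c, by simp⟩
  have hm : (RingHom.ker (χ : A →+* ℂ)).IsMaximal :=
    RingHom.ker_isMaximal_of_surjective _ hχsurj
  have hker : RingHom.ker (algebraMap A (MvPolynomial (Fin n) ℂ)) ≤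
      RingHom.ker (χ : A →+* ℂ) := by
    have : RingHom.ker (algebraMap A (MvPolynomial (Fin n) ℂ)) = ⊥ := by
      rw [← RingHom.injective_iff_ker_eq_bot]
      exact Subtype.val_injective
    rw [this]; exact bot_le
  obtain ⟨M, hM, hMc⟩ := Ideal.exists_ideal_over_maximal_of_isIntegral
    (RingHom.ker (χ : A →+* ℂ)) hker
  obtain ⟨v, rfl⟩ := (isMaximal_iff_eq_vanishingIdeal_singleton (I := M)).mp hM
  refine ⟨v, fun i => ?_⟩
  have hfiA : f i ∈ A := Algebra.subset_adjoin ⟨i, rfl⟩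
  have haevX : hindep.aevalEquiv (X i) = (⟨f i, hfiA⟩ : A) := by
    apply Subtype.val_injective
    have := hindep.algebraMap_aevalEquiv (X i)
    rw [aeval_X] at this
    exact this
  have hχf : χ ⟨f i, hfiA⟩ = y i := by
    rw [hχ, AlgHom.comp_apply]
    have : (hindep.aevalEquiv.symm : A →ₐ[ℂ] MvPolynomial (Fin n) ℂ) ⟨f i, hfiA⟩ = X i := by
      rw [← haevX]
      exact hindep.aevalEquiv.symm_apply_apply (X i)
    rw [this, aeval_X]
  have hCA : (C (y i) : MvPolynomial (Fin n) ℂ) ∈ A := by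
    have : (C (y i) : MvPolynomial (Fin n) ℂ) = algebraMap ℂ (MvPolynomial (Fin n) ℂ) (y i) := by
      rw [algebraMap_eq]
    rw [this]
    exact Subalgebra.algebraMap_mem A _
  have hel : (⟨f i, hfiA⟩ - ⟨C (y i), hCA⟩ : A) ∈ RingHom.ker (χ : A →+* ℂ) := by
    rw [RingHom.mem_ker]
    have hCy : χ ⟨C (y i), hCA⟩ = y i := by
      have : (⟨C (y i), hCA⟩ : A) = algebraMap ℂ A (y i) := by
        apply Subtype.val_injective
        simp [algebraMap_eq]
      rw [this]
      exact χ.commutes (y i)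
    show χ _ = 0
    rw [map_sub, hχf, hCy, sub_self]
  rw [← hMc, Ideal.mem_comap] at hel
  have : algebraMap A (MvPolynomial (Fin n) ℂ) (⟨f i, hfiA⟩ - ⟨C (y i), hCA⟩)
      = f i - C (y i) := rfl
  rw [this, mem_vanishingIdeal_singleton_iff] at hel
  rw [map_sub, aeval_C, Algebra.algebraMap_self, RingHom.id_apply, sub_eq_zero] at hel
  exact hel

end Integral

section Homog

lemma eval_homog_smul {p : MvPolynomial (Fin n) ℂ} {m : ℕ} (hp : p.IsHomogeneous m)
    (t : ℂ) (v : Fin n → ℂ) :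
    eval (fun i => t * v i) p = t ^ m * eval v p := by
  rw [eval_eq, eval_eq, Finset.mul_sum]
  refine Finset.sum_congr rfl fun dd hd => ?_
  have hdeg : ∑ i ∈ dd.support, dd i = m := by
    have h1 := hp (mem_support_iff.mp hd)
    simpa [Finsupp.weight_apply, Finsupp.sum] using h1
  calc coeff dd p * ∏ i ∈ dd.support, (t * v i) ^ dd i
      = coeff dd p * ((∏ i ∈ dd.support, t ^ dd i) * ∏ i ∈ dd.support, v i ^ dd i) := by
        rw [← Finset.prod_mul_distrib]
        simp_rw [mul_pow]
    _ = t ^ m * (coeff dd p * ∏ i ∈ dd.support, v i ^ dd i) := by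
        rw [Finset.prod_pow_eq_pow_sum, hdeg]; ring

lemma X_ne_C (i : Fin n) (c : ℂ) : (X i : MvPolynomial (Fin n) ℂ) ≠ C c := by
  intro h
  have h1 := congrArg (coeff (Finsupp.single i 1)) h
  rw [coeff_X, coeff_C] at h1
  rw [if_neg (fun (hcond : (0 : Fin n →₀ ℕ) = Finsupp.single i 1) => one_ne_zero (Finsupp.single_eq_zero.mp hcond.symm))] at h1
  exact one_ne_zero ((if_pos rfl).symm.trans h1)

lemma deg_ne_zero {f : Fin n → MvPolynomial (Fin n) ℂ} {d : Fin n → ℕ}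
    (hhom : ∀ i, (f i).IsHomogeneous (d i)) (hindep : AlgebraicIndependent ℂ f)
    (i : Fin n) : d i ≠ 0 := by
  intro hd0
  have hC : f i = C (coeff 0 (f i)) := by
    apply MvPolynomial.ext
    intro dd
    rcases eq_or_ne dd 0 with rfl | hdd
    · rw [coeff_C, if_pos rfl]
    · rw [coeff_C, if_neg (Ne.symm hdd)]
      by_contra hc
      have h1 := (hhom i) hc
      rw [hd0] at h1
      apply hdd
      have h2 : ∑ j ∈ dd.support, dd j = 0 := by
        simpa [Finsupp.weight_apply, Finsupp.sum] using h1
      ext j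
      by_cases hj : j ∈ dd.support
      · exact Finset.sum_eq_zero_iff.mp h2 j hj
      · simpa using Finsupp.notMem_support_iff.mp hj
  have h0 : (aeval f : MvPolynomial (Fin n) ℂ →ₐ[ℂ] MvPolynomial (Fin n) ℂ)
      ((X i : MvPolynomial (Fin n) ℂ) - C (coeff 0 (f i)))
      = (aeval f : MvPolynomial (Fin n) ℂ →ₐ[ℂ] MvPolynomial (Fin n) ℂ) 0 := by
    have hCmap : (algebraMap ℂ (MvPolynomial (Fin n) ℂ)) (coeff 0 (f i))
        = C (coeff 0 (f i)) := by rw [MvPolynomial.algebraMap_eq]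
    rw [map_sub, aeval_X, aeval_C, map_zero, hCmap, ← hC, sub_self]
  have := hindep h0
  rw [sub_eq_zero] at this
  exact X_ne_C i _ this

lemma eval_zero_of_homog {f : Fin n → MvPolynomial (Fin n) ℂ} {d : Fin n → ℕ}
    (hhom : ∀ i, (f i).IsHomogeneous (d i)) (hindep : AlgebraicIndependent ℂ f)
    (i : Fin n) : eval (0 : Fin n → ℂ) (f i) = 0 := by
  have h := eval_homog_smul (hhom i) 0 0
  have h2 : (fun j => (0:ℂ) * (0 : Fin n → ℂ) j) = (0 : Fin n → ℂ) := by
    funext j; simp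
  rw [h2, zero_pow (deg_ne_zero hhom hindep i), zero_mul] at h
  exact h

end Homog

section Proper

lemma compact_preimage {f : Fin n → MvPolynomial (Fin n) ℂ} {d : Fin n → ℕ}
    (hhom : ∀ i, (f i).IsHomogeneous (d i))
    (hdne : ∀ i, d i ≠ 0)
    (hzero : ∀ v : Fin n → ℂ, (∀ i, eval v (f i) = 0) → v = 0)
    {K : Set (Fin n → ℂ)} (hK : IsCompact K) :
    IsCompact ((fun (v : Fin n → ℂ) (i : Fin n) => eval v (f i)) ⁻¹' K) := by
  set F : (Fin n → ℂ) → (Fin n → ℂ) := fun v i => eval v (f i) with hF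
  have hFc : Continuous F := continuous_pi fun i => MvPolynomial.continuous_eval (f i)
  rcases Nat.eq_zero_or_pos n with hn | hn
  · subst hn
    exact (Set.toFinite _).isCompact
  rw [Metric.isCompact_iff_isClosed_bounded]
  constructor
  · exact hK.isClosed.preimage hFc
  -- boundedness
  obtain ⟨R, hR⟩ := hK.isBounded.subset_closedBall 0
  have hnontriv : Nontrivial (Fin n → ℂ) := by
    refine ⟨0, fun _ => 1, ?_⟩
    intro h
    have := congrFun h ⟨0, hn⟩
    simp at this
  set S := Metric.sphere (0 : Fin n → ℂ) 1 with hS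
  have hScpt : IsCompact S := isCompact_sphere 0 1
  have hSne : S.Nonempty := NormedSpace.sphere_nonempty.mpr zero_le_one
  obtain ⟨u0, hu0S, hu0min⟩ := hScpt.exists_isMinOn hSne
    ((continuous_norm.comp hFc).continuousOn)
  set c : ℝ := ‖F u0‖ with hc
  have hcpos : 0 < c := by
    rcases lt_or_eq_of_le (norm_nonneg (F u0)) with h | h
    · exact h
    · exfalso
      have hFu0 : F u0 = 0 := by rwa [eq_comm, norm_eq_zero] at h
      have : u0 = 0 := hzero u0 (fun i => congrFun hFu0 i)
      rw [this] at hu0S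
      simp [hS] at hu0S
  -- main estimate
  have key : ∀ v : Fin n → ℂ, 1 ≤ ‖v‖ → F v ∈ K → ‖v‖ ≤ R / c := by
    intro v hv hvK
    have hvne : ‖v‖ ≠ 0 := by positivity
    set t : ℝ := ‖v‖ with ht
    have htpos : (0:ℝ) < t := lt_of_lt_of_le one_pos hv
    have htC : ‖((t : ℂ))‖ = t := by
      rw [Complex.norm_real, Real.norm_eq_abs, abs_of_pos htpos]
    have htCne : (t : ℂ) ≠ 0 := by
      exact_mod_cast ne_of_gt htpos
    set u : Fin n → ℂ := ((t : ℂ))⁻¹ • v with hu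
    have huS : u ∈ S := by
      rw [hS, mem_sphere_zero_iff_norm, hu, norm_smul, norm_inv, htC,
        inv_mul_cancel₀ hvne]
    have hvu : (fun j => (t : ℂ) * u j) = v := by
      funext j
      rw [hu, Pi.smul_apply, smul_eq_mul, ← mul_assoc, mul_inv_cancel₀ htCne, one_mul]
    have hFvi : ∀ i, ‖F v i‖ = t ^ d i * ‖F u i‖ := by
      intro i
      have : F v i = (t : ℂ) ^ d i * F u i := by
        rw [hF]
        simp only []
        rw [← hvu, eval_homog_smul (hhom i)]
      rw [this, norm_mul, norm_pow, htC]
    have hA : ∀ i, ‖((t : ℂ) • F u) i‖ ≤ ‖F v‖ := by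
      intro i
      rw [Pi.smul_apply, smul_eq_mul, norm_mul, htC]
      have h1 : t * ‖F u i‖ ≤ t ^ d i * ‖F u i‖ := by
        refine mul_le_mul_of_nonneg_right ?_ (norm_nonneg _)
        calc t = t ^ 1 := (pow_one t).symm
          _ ≤ t ^ d i := pow_le_pow_right₀ hv (Nat.one_le_iff_ne_zero.mpr (hdne i))
      calc t * ‖F u i‖ ≤ t ^ d i * ‖F u i‖ := h1
        _ = ‖F v i‖ := (hFvi i).symm
        _ ≤ ‖F v‖ := norm_le_pi_norm (F v) i
    have h3 : ‖(t : ℂ) • F u‖ ≤ ‖F v‖ :=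
      (pi_norm_le_iff_of_nonneg (norm_nonneg _)).mpr hA
    have h4 : ‖(t : ℂ) • F u‖ = t * ‖F u‖ := by rw [norm_smul, htC]
    have h5 : c ≤ ‖F u‖ := hu0min huS
    have h6 : ‖F v‖ ≤ R := by
      have := hR hvK
      rwa [Metric.mem_closedBall, dist_zero_right] at this
    rw [le_div_iff₀ hcpos]
    calc t * c ≤ t * ‖F u‖ := by
          exact mul_le_mul_of_nonneg_left h5 (le_of_lt htpos)
      _ = ‖(t : ℂ) • F u‖ := h4.symm
      _ ≤ ‖F v‖ := h3
      _ ≤ R := h6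
  refine Bornology.IsBounded.subset (Metric.isBounded_closedBall
    (x := (0 : Fin n → ℂ)) (r := max 1 (R / c))) ?_
  intro v hv
  rw [Metric.mem_closedBall, dist_zero_right]
  by_cases h1 : ‖v‖ ≤ 1
  · exact le_trans h1 (le_max_left _ _)
  · exact le_trans (key v (le_of_lt (lt_of_not_ge h1)) hv) (le_max_right _ _)

end Proper
end ChevAux

set_option maxHeartbeats 1000000 in
set_option synthInstance.maxHeartbeats 400000 in
open ChevAux in
/-- Chevalley: if `G ≤ U(n)` is a finite unitary reflection group and
`f₁, …, f_n` are homogeneous, algebraically independent generators of the algebra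
of `G`-invariant polynomials, then `v ↦ (f₁(v), …, f_n(v))` descends to a
homeomorphism `ℂⁿ/G ≃ₜ ℂⁿ`. -/
theorem stmt_8 (n : ℕ) (G : Subgroup (UGrp n)) [Finite G]
    (hgen : Subgroup.closure {g : UGrp n | g ∈ G ∧ IsUnitaryReflection g} = G)
    (f : Fin n → MvPolynomial (Fin n) ℂ) (d : Fin n → ℕ)
    (hhom : ∀ i, (f i).IsHomogeneous (d i))
    (hindep : AlgebraicIndependent ℂ f)
    (hinv : ∀ i, ∀ g ∈ G, ∀ v : Fin n → ℂ,
      MvPolynomial.eval (Matrix.mulVec (g : UGrp n).1 v) (f i) = MvPolynomial.eval v (f i))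
    (hgenalg : ∀ p : MvPolynomial (Fin n) ℂ,
      (∀ g ∈ G, ∀ v : Fin n → ℂ,
        MvPolynomial.eval (Matrix.mulVec (g : UGrp n).1 v) p = MvPolynomial.eval v p) →
      p ∈ Algebra.adjoin ℂ (Set.range f)) :
    ∃ φ : Quotient (MulAction.orbitRel G (Fin n → ℂ)) ≃ₜ (Fin n → ℂ),
      ∀ v : Fin n → ℂ,
        φ (Quotient.mk (MulAction.orbitRel G (Fin n → ℂ)) v) =
          fun i => MvPolynomial.eval v (f i) := by
  classical
  set F : (Fin n → ℂ) → (Fin n → ℂ) := fun v i => eval v (f i) with hFdef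
  have hFc : Continuous F := continuous_pi fun i => MvPolynomial.continuous_eval (f i)
  have hsmul : ∀ (g : G) (v : Fin n → ℂ), g • v = Matrix.mulVec ((g : UGrp n)).1 v :=
    fun g v => rfl
  have hconst : ∀ a b : Fin n → ℂ,
      (MulAction.orbitRel G (Fin n → ℂ)).r a b → F a = F b := by
    intro a b hab
    have hab' : a ∈ MulAction.orbit G b := hab
    obtain ⟨g, hg⟩ := hab'
    change g • b = a at hg
    funext i
    rw [hFdef]
    simp only []
    rw [← hg, hsmul g b]
    exact hinv i g g.2 b
  set Φ : Quotient (MulAction.orbitRel G (Fin n → ℂ)) → (Fin n → ℂ) :=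
    Quotient.lift F hconst with hΦdef
  have hΦc : Continuous Φ := Continuous.quotient_lift hFc hconst
  have hinj : Function.Injective Φ := by
    intro x y
    induction x using Quotient.inductionOn with | h v =>
    induction y using Quotient.inductionOn with | h w =>
    intro hvw
    have hvw' : ∀ i, eval v (f i) = eval w (f i) := fun i => congrFun hvw i
    obtain ⟨g, hgG, hgv⟩ := inj_orbit G f hgenalg hvw'
    apply Quotient.sound
    show v ∈ MulAction.orbit G w
    refine ⟨(⟨g, hgG⟩ : G)⁻¹, ?_⟩
    show ((⟨g, hgG⟩ : G)⁻¹ : G) • w = v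
    have h1 : ((⟨g, hgG⟩ : G)⁻¹ : G) • w = Matrix.mulVec (g⁻¹ : UGrp n).1 w := rfl
    rw [h1, ← hgv, Matrix.mulVec_mulVec]
    have h2 : (g⁻¹ : UGrp n).1 * g.1 = ((g⁻¹ * g : UGrp n) : Matrix (Fin n) (Fin n) ℂ) := rfl
    rw [h2, inv_mul_cancel g]
    exact Matrix.one_mulVec v
  have hdne : ∀ i, d i ≠ 0 := deg_ne_zero hhom hindep
  have hzero : ∀ v : Fin n → ℂ, (∀ i, eval v (f i) = 0) → v = 0 := by
    intro v hv
    obtain ⟨g, hgG, hgv⟩ := inj_orbit G f hgenalg (v := (0 : Fin n → ℂ)) (w := v)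
      (fun i => by rw [eval_zero_of_homog hhom hindep i, hv i])
    rw [← hgv, Matrix.mulVec_zero]
  have hsurj : Function.Surjective Φ := by
    intro y
    obtain ⟨v, hv⟩ := surj_aux G f hindep hgenalg y
    exact ⟨Quotient.mk _ v, funext hv⟩
  have hproper : IsProperMap F :=
    isProperMap_iff_isCompact_preimage.mpr
      ⟨hFc, fun K hK => compact_preimage hhom hdne hzero hK⟩
  have hclosed : IsClosedMap F := hproper.isClosedMap
  set e : Quotient (MulAction.orbitRel G (Fin n → ℂ)) ≃ (Fin n → ℂ) :=
    Equiv.ofBijective Φ ⟨hinj, hsurj⟩ with hedef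
  have hΦclosed : IsClosedMap Φ := by
    intro C hC
    have h1 : Φ '' C = F '' (Quotient.mk (MulAction.orbitRel G (Fin n → ℂ)) ⁻¹' C) := by
      have h2 : F = Φ ∘ (Quotient.mk (MulAction.orbitRel G (Fin n → ℂ))) := rfl
      rw [h2, Set.image_comp,
        Set.image_preimage_eq C (Quotient.mk_surjective)]
    rw [h1]
    exact hclosed _ (hC.preimage continuous_quot_mk)
  refine ⟨{ toEquiv := e, continuous_toFun := hΦc, continuous_invFun := ?_ }, fun v => rfl⟩
  rw [continuous_iff_isClosed]
  intro C hC
  rw [show e.invFun ⁻¹' C = ⇑e.symm ⁻¹' C from rfl, ← Equiv.image_eq_preimage_symm]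
  exact hΦclosed C hC
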